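/- Deficiency spaces for the momentum operator on the box [0,1]. Let 𝒮 be the set of smooth functions f : ℝ → ℂ such that all iterated derivatives of f (including f itself) vanish at 0 and at 1, and let 𝒞 be the set of smooth functions f : ℝ → ℂ with compact support contained in the open interval (0,1). Let D be any set of functions with 𝒞 ⊆ D ⊆ 𝒮. Then for each choice of sign ∓: a square-integrable function g on (0,1) satisfies ∫₀¹ conj(g(x))·(f′(x) ∓ f(x)) dx = 0 for every f ∈ D if and only if there exists c ∈ ℂ such that g(x) = c·e^{∓x} for almost every x ∈ (0,1). -/

import Mathlib

open MeasureTheory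
open scoped ContDiff

/-- The space `𝒮` of smooth functions on `ℝ` all of whose iterated derivatives (including the
function itself) vanish at `0` and at `1`. -/
def SpaceS : Set (ℝ → ℂ) :=
  {f | ContDiff ℝ (⊤ : ℕ∞) f ∧ ∀ n : ℕ, iteratedDeriv n f 0 = 0 ∧ iteratedDeriv n f 1 = 0}

/-- The space `𝒞` of smooth functions on `ℝ` with compact support contained in `(0,1)`. -/
def SpaceC : Set (ℝ → ℂ) :=
  {f | ContDiff ℝ (⊤ : ℕ∞) f ∧ HasCompactSupport f ∧ tsupport f ⊆ Set.Ioo 0 1}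

private lemma expDeriv (τ : ℂ) (x : ℝ) :
    HasDerivAt (fun x : ℝ => Complex.exp (τ * x)) (τ * Complex.exp (τ * x)) x := by
  have h1 : HasDerivAt (fun x : ℝ => (τ * x : ℂ)) τ x := by
    simpa using (Complex.ofRealCLM.hasDerivAt (x := x)).const_mul τ
  simpa [mul_comm] using h1.cexp

private lemma expSmooth (τ : ℂ) : ContDiff ℝ (⊤ : ℕ∞) (fun x : ℝ => Complex.exp (τ * x)) :=
  Complex.contDiff_exp.comp (contDiff_const.mul Complex.ofRealCLM.contDiff)

private lemma expConj (τ x : ℝ) :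
    (starRingEnd ℂ) (Complex.exp ((τ:ℂ) * x)) = Complex.exp ((τ:ℂ) * x) := by
  rw [← Complex.exp_conj]; simp [Complex.conj_ofReal]

/-- **Deficiency spaces for the momentum operator on the box `[0,1]`.**
For any domain `D` with `𝒞 ⊆ D ⊆ 𝒮` and either sign `σ = ±1`, a square-integrable `g` on
`(0,1)` satisfies `∫₀¹ conj(g)·(f′ − σ f) = 0` for all `f ∈ D` iff `g = c·e^{−σx}` a.e. for
some `c ∈ ℂ`. -/
theorem deficiency_spaces_momentum_box
    (D : Set (ℝ → ℂ)) (hCD : SpaceC ⊆ D) (hDS : D ⊆ SpaceS)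
    (σ : ℝ) (hσ : σ = 1 ∨ σ = -1)
    (g : ℝ → ℂ) (hg : MemLp g 2 (volume.restrict (Set.Ioo (0 : ℝ) 1))) :
    (∀ f ∈ D,
        ∫ x in Set.Ioo (0 : ℝ) 1, (starRingEnd ℂ) (g x) * (deriv f x - (σ : ℂ) * f x) = 0) ↔
      ∃ c : ℂ, ∀ᵐ x ∂(volume.restrict (Set.Ioo (0 : ℝ) 1)),
        g x = c * Complex.exp (-(σ : ℂ) * (x : ℂ)) := by
  clear hσ
  set μ := volume.restrict (Set.Ioo (0 : ℝ) 1) with hμdef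
  have hUopen : IsOpen (Set.Ioo (0:ℝ) 1) := isOpen_Ioo
  haveI : IsFiniteMeasure μ := by constructor; rw [hμdef]; simp [Real.volume_Ioo]
  constructor
  · -- forward direction
    intro h
    have hgint : Integrable g μ := hg.integrable one_le_two
    have hconjint : Integrable (fun x => (starRingEnd ℂ) (g x)) μ :=
      (Complex.conjLIE.integrable_comp_iff (𝕜 := ℝ)).mpr hgint
    let u : ℝ → ℂ := fun x : ℝ => Complex.exp ((σ:ℂ) * x) * (starRingEnd ℂ) (g x)
    have hudef : u = fun x : ℝ => Complex.exp ((σ:ℂ) * x) * (starRingEnd ℂ) (g x) := rfl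
    have hexp_bound : ∀ᵐ x : ℝ ∂μ, ‖Complex.exp ((σ:ℂ) * x)‖ ≤ Real.exp |σ| := by
      filter_upwards [ae_restrict_mem hUopen.measurableSet] with x hx
      rw [Complex.norm_exp]
      apply Real.exp_le_exp.mpr
      have : (↑σ * ↑x : ℂ).re = σ * x := by
        simp [Complex.mul_re, Complex.ofReal_re, Complex.ofReal_im]
      rw [this]
      calc σ * x ≤ |σ * x| := le_abs_self _
        _ = |σ| * |x| := abs_mul _ _
        _ ≤ |σ| * 1 := by
            apply mul_le_mul_of_nonneg_left _ (abs_nonneg σ)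
            rw [abs_of_pos hx.1]; exact hx.2.le
        _ = |σ| := mul_one _
    have hexp_meas : AEStronglyMeasurable (fun x : ℝ => Complex.exp ((σ:ℂ) * x)) μ :=
      ((expSmooth (σ:ℂ)).continuous).aestronglyMeasurable
    have huint : Integrable u μ := hconjint.bdd_mul hexp_meas hexp_bound
    -- Claim A: ∫ u ψ' = 0 for ψ smooth compactly supported in (0,1)
    have claimA : ∀ ψ : ℝ → ℂ, ContDiff ℝ (⊤ : ℕ∞) ψ → HasCompactSupport ψ →
        tsupport ψ ⊆ Set.Ioo 0 1 → ∫ x in Set.Ioo (0:ℝ) 1, u x * deriv ψ x = 0 := by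
      intro ψ hψ hψc hψs
      set f : ℝ → ℂ := fun x : ℝ => Complex.exp ((σ:ℂ) * x) * ψ x with hfdef
      have hψdiff : ∀ x : ℝ, HasDerivAt ψ (deriv ψ x) x := fun x =>
        ((hψ.differentiable (by simp)) x).hasDerivAt
      have hfderiv : ∀ x : ℝ, HasDerivAt f
          ((σ:ℂ) * Complex.exp ((σ:ℂ) * x) * ψ x + Complex.exp ((σ:ℂ) * x) * deriv ψ x) x :=
        fun x => (expDeriv (σ:ℂ) x).mul (hψdiff x)
      have hfC : f ∈ SpaceC := by
        refine ⟨(expSmooth (σ:ℂ)).mul hψ, hψc.mul_left, ?_⟩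
        refine subset_trans (closure_mono ?_) hψs
        exact Function.support_mul_subset_right _ _
      have h0 := h f (hCD hfC)
      rw [← h0]
      apply setIntegral_congr_fun hUopen.measurableSet
      intro x _
      show u x * deriv ψ x = (starRingEnd ℂ) (g x) * (deriv f x - (σ:ℂ) * f x)
      rw [(hfderiv x).deriv]
      simp only [hfdef, hudef]
      ring
    -- bump function
    set ρb : ContDiffBump (1/2 : ℝ) := ⟨1/4, 1/3, by norm_num, by norm_num⟩ with hρbdef
    set ρ : ℝ → ℝ := ρb.normed volume with hρdef
    have hρsmooth : ContDiff ℝ (⊤ : ℕ∞) ρ := ρb.contDiff_normed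
    have hρsupp : tsupport ρ = Set.Icc (1/6 : ℝ) (5/6) := by
      rw [hρdef, ρb.tsupport_normed_eq, Real.closedBall_eq_Icc]
      norm_num
    have hρcompact : HasCompactSupport ρ := ρb.hasCompactSupport_normed
    have hρint1 : ∫ x, ρ x = 1 := ρb.integral_normed
    have hρsub : tsupport ρ ⊆ Set.Ioo 0 1 := by
      rw [hρsupp]; apply Set.Icc_subset_Ioo <;> norm_num
    have hρcont : Continuous ρ := hρsmooth.continuous
    have hρintegrable : Integrable ρ (volume : Measure ℝ) :=
      hρcont.integrable_of_hasCompactSupport hρcompact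
    let k : ℂ := ∫ x in Set.Ioo (0:ℝ) 1, u x * (ρ x : ℂ)
    have hkdef : k = ∫ x in Set.Ioo (0:ℝ) 1, u x * (ρ x : ℂ) := rfl
    -- key step: ∫ φ • (u - k) = 0 for all real test functions φ
    have key : ∀ φ : ℝ → ℝ, ContDiff ℝ ∞ φ → HasCompactSupport φ →
        tsupport φ ⊆ Set.Ioo 0 1 → ∫ x, φ x • (u x - k) ∂μ = 0 := by
      intro φ hφ hφc hφs
      have hφcont : Continuous φ := hφ.continuous
      set I : ℝ := ∫ x, φ x with hIdef
      set θ : ℝ → ℝ := fun t => φ t - I * ρ t with hθdef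
      have hθsmooth : ContDiff ℝ ∞ θ := hφ.sub (contDiff_const.mul hρsmooth)
      have hθcont : Continuous θ := hθsmooth.continuous
      set ψ : ℝ → ℝ := fun x => ∫ t in (0:ℝ)..x, θ t with hψdef
      have hψderiv : ∀ x : ℝ, HasDerivAt ψ (θ x) x := fun x =>
        (hθcont.integral_hasStrictDerivAt 0 x).hasDerivAt
      have hψsmooth : ContDiff ℝ ∞ ψ := by
        rw [contDiff_infty_iff_deriv]
        refine ⟨fun x => (hψderiv x).differentiableAt, ?_⟩
        have : deriv ψ = θ := funext fun x => (hψderiv x).deriv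
        rw [this]; exact hθsmooth
      set ψc : ℝ → ℂ := fun x => (ψ x : ℂ) with hψcdef
      have hψcderiv : ∀ x : ℝ, HasDerivAt ψc ((θ x : ℝ) : ℂ) x := fun x =>
        (hψderiv x).ofReal_comp
      have hψcsmooth : ContDiff ℝ (⊤ : ℕ∞) ψc :=
        Complex.ofRealCLM.contDiff.comp hψsmooth
      -- support bounds
      set K : Set ℝ := tsupport φ ∪ tsupport ρ with hKdef
      have hKcompact : IsCompact K := hφc.union hρcompact
      have hKne : K.Nonempty := by
        refine ⟨1/2, Or.inr ?_⟩
        rw [hρsupp]; constructor <;> norm_num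
      have hKsub : K ⊆ Set.Ioo 0 1 := Set.union_subset hφs hρsub
      set a : ℝ := sInf K with hadef
      set b : ℝ := sSup K with hbdef
      have haK : a ∈ K := hKcompact.sInf_mem hKne
      have hbK : b ∈ K := hKcompact.sSup_mem hKne
      have ha0 : (0:ℝ) < a := (hKsub haK).1
      have hb1 : b < 1 := (hKsub hbK).2
      have hb0 : (0:ℝ) < b := (hKsub hbK).1
      have hKab : K ⊆ Set.Icc a b := fun x hx =>
        ⟨csInf_le hKcompact.bddBelow hx, le_csSup hKcompact.bddAbove hx⟩
      have hθ0 : ∀ t, t ∉ Set.Icc a b → θ t = 0 := by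
        intro t ht
        have htK : t ∉ K := fun h => ht (hKab h)
        have h1 : φ t = 0 := image_eq_zero_of_notMem_tsupport (fun h => htK (Or.inl h))
        have h2 : ρ t = 0 := image_eq_zero_of_notMem_tsupport (fun h => htK (Or.inr h))
        simp [hθdef, h1, h2]
      have hθint : Integrable θ (volume : Measure ℝ) :=
        (hφcont.integrable_of_hasCompactSupport hφc).sub (hρintegrable.const_mul I)
      have hθtotal : ∫ t, θ t = 0 := by
        rw [hθdef]
        rw [integral_sub (hφcont.integrable_of_hasCompactSupport hφc) (hρintegrable.const_mul I)]
        rw [integral_const_mul, hρint1, mul_one, hIdef, sub_self]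
      have hψsupp : Function.support ψc ⊆ Set.Icc a b := by
        intro x hx
        by_contra hxab
        apply hx
        have hψx : ψ x = 0 := by
          rcases not_and_or.mp (Set.mem_Icc.not.mp hxab) with hlt | hgt
          · push_neg at hlt
            show (∫ t in (0:ℝ)..x, θ t) = 0
            have : Set.EqOn θ 0 (Set.uIcc 0 x) := by
              intro t ht
              apply hθ0
              rw [Set.mem_Icc.not]
              rintro ⟨h1, -⟩
              rcases Set.mem_uIcc.mp ht with ⟨_, h3⟩ | ⟨_, h3⟩
              · exact absurd (h1.trans h3) (not_le.mpr hlt)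
              · exact absurd (h1.trans h3) (not_le.mpr ha0)
            rw [intervalIntegral.integral_congr this]
            simp
          · push_neg at hgt
            show (∫ t in (0:ℝ)..x, θ t) = 0
            rw [intervalIntegral.integral_of_le (hb0.trans hgt).le]
            rw [setIntegral_eq_integral_of_forall_compl_eq_zero]
            · exact hθtotal
            · intro t ht
              apply hθ0
              rw [Set.mem_Icc.not]
              rintro ⟨h1, h2⟩
              rcases not_and_or.mp (Set.mem_Ioc.not.mp ht) with h3 | h3
              · push_neg at h3; exact absurd (ha0.trans_le h1) (not_lt.mpr h3)
              · push_neg at h3; exact absurd ((h2.trans_lt hgt).trans h3) (lt_irrefl t)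
        simp [hψcdef, hψx]
      have hψccompact : HasCompactSupport ψc :=
        HasCompactSupport.of_support_subset_isCompact isCompact_Icc hψsupp
      have hψcsub : tsupport ψc ⊆ Set.Ioo 0 1 := by
        refine subset_trans ?_ (Set.Icc_subset_Ioo ha0 hb1)
        exact closure_minimal hψsupp isClosed_Icc
      have hA := claimA ψc hψcsmooth hψccompact hψcsub
      have hderiv_eq : ∀ x : ℝ, deriv ψc x = ((θ x : ℝ) : ℂ) := fun x => (hψcderiv x).deriv
      -- integrabilities
      obtain ⟨Cφ, hCφ⟩ := hφc.exists_bound_of_continuous hφcont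
      obtain ⟨Cρ, hCρ⟩ := hρcompact.exists_bound_of_continuous hρcont
      have hφmeas : AEStronglyMeasurable (fun x : ℝ => ((φ x : ℝ) : ℂ)) μ :=
        (Complex.continuous_ofReal.comp hφcont).aestronglyMeasurable
      have hρmeas : AEStronglyMeasurable (fun x : ℝ => ((ρ x : ℝ) : ℂ)) μ :=
        (Complex.continuous_ofReal.comp hρcont).aestronglyMeasurable
      have hφbd : ∀ᵐ x ∂μ, ‖((φ x : ℝ) : ℂ)‖ ≤ Cφ := by
        filter_upwards with x; rw [Complex.norm_real]; exact hCφ x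
      have hρbd : ∀ᵐ x ∂μ, ‖((ρ x : ℝ) : ℂ)‖ ≤ Cρ := by
        filter_upwards with x; rw [Complex.norm_real]; exact hCρ x
      have huφint : Integrable (fun x => ((φ x : ℝ) : ℂ) * u x) μ :=
        huint.bdd_mul hφmeas hφbd
      have huρint : Integrable (fun x => ((ρ x : ℝ) : ℂ) * u x) μ :=
        huint.bdd_mul hρmeas hρbd
      -- from claim A: ∫ u φ = I * k
      have hres : ∫ x in Set.Ioo (0:ℝ) 1, ((φ x : ℝ) : ℂ) * u x = (I : ℂ) * k := by
        have h1 : ∫ x in Set.Ioo (0:ℝ) 1, u x * ((θ x : ℝ) : ℂ) = 0 := by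
          rw [← hA]
          apply setIntegral_congr_fun hUopen.measurableSet
          intro x _
          show u x * ((θ x : ℝ) : ℂ) = u x * deriv ψc x
          rw [hderiv_eq x]
        have h2 : ∀ x : ℝ, u x * ((θ x : ℝ) : ℂ)
            = ((φ x : ℝ) : ℂ) * u x - (I : ℂ) * (((ρ x : ℝ) : ℂ) * u x) := by
          intro x; rw [hθdef]; push_cast; ring
        rw [show (fun x => u x * ((θ x : ℝ) : ℂ))
            = fun x => ((φ x : ℝ) : ℂ) * u x - (I : ℂ) * (((ρ x : ℝ) : ℂ) * u x)
            from funext h2] at h1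
        rw [integral_sub huφint (huρint.const_mul _), integral_const_mul, sub_eq_zero] at h1
        rw [h1, hkdef]
        congr 1
        apply setIntegral_congr_fun hUopen.measurableSet
        intro x _; ring
      -- conclude
      have hsmul : ∀ x : ℝ, φ x • (u x - k) = ((φ x : ℝ) : ℂ) * u x - ((φ x : ℝ) : ℂ) * k := by
        intro x
        rw [Complex.real_smul]; ring
      rw [show (fun x => φ x • (u x - k))
          = fun x => ((φ x : ℝ) : ℂ) * u x - ((φ x : ℝ) : ℂ) * k from funext hsmul]
      have hφkint : Integrable (fun x => ((φ x : ℝ) : ℂ) * k) μ :=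
        (integrable_const k).bdd_mul hφmeas hφbd
      rw [integral_sub huφint hφkint]
      have h3 : ∫ x, ((φ x : ℝ) : ℂ) * k ∂μ = (I:ℂ) * k := by
        rw [integral_mul_const,
          show (∫ x, ((φ x : ℝ) : ℂ) ∂μ) = ((∫ x, φ x ∂μ : ℝ) : ℂ) from integral_ofReal]
        have h4 : ∫ x, φ x ∂μ = I := by
          rw [hμdef, setIntegral_eq_integral_of_forall_compl_eq_zero]
          intro x hx
          exact image_eq_zero_of_notMem_tsupport (fun h => hx (hφs h))
        rw [h4]
      rw [hμdef] at *
      rw [hres, h3, sub_self]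
    -- apply the distribution theory lemma
    have hloc : LocallyIntegrableOn (fun x => u x - k) (Set.Ioo (0:ℝ) 1) μ :=
      ((huint.sub (integrable_const k)).locallyIntegrable).locallyIntegrableOn _
    have hae := hUopen.ae_eq_zero_of_integral_contDiff_smul_eq_zero (μ := μ) hloc
      (fun φ hφ hφc hφs => key φ hφ hφc hφs)
    refine ⟨(starRingEnd ℂ) k, ?_⟩
    filter_upwards [hae, ae_restrict_mem hUopen.measurableSet] with x hx hxm
    have huk : u x = k := sub_eq_zero.mp (hx hxm)
    have hne : Complex.exp ((σ:ℂ) * x) ≠ 0 := Complex.exp_ne_zero _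
    have h1 : (starRingEnd ℂ) (g x) = k * Complex.exp (-(σ:ℂ) * x) := by
      rw [neg_mul, Complex.exp_neg, ← huk, hudef]
      field_simp
    calc g x = (starRingEnd ℂ) ((starRingEnd ℂ) (g x)) := by
          rw [Complex.conj_conj]
      _ = (starRingEnd ℂ) k * Complex.exp (-(σ:ℂ) * x) := by
          rw [h1, map_mul]
          congr 1
          rw [show (-(σ:ℂ) * x) = ((-σ : ℝ) : ℂ) * x by push_cast; ring]
          exact expConj (-σ) x
  · -- reverse direction
    rintro ⟨c, hc⟩ f hfD
    rw [hμdef]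
    obtain ⟨hfs, hfv⟩ := hDS hfD
    have hf0 : f 0 = 0 := by simpa [iteratedDeriv_zero] using (hfv 0).1
    have hf1 : f 1 = 0 := by simpa [iteratedDeriv_zero] using (hfv 0).2
    have hfdiff : ∀ x : ℝ, HasDerivAt f (deriv f x) x := fun x =>
      ((hfs.differentiable (by simp)) x).hasDerivAt
    set F : ℝ → ℂ := fun x : ℝ => Complex.exp (-(σ:ℂ) * x) * f x with hFdef
    have hFderiv : ∀ x : ℝ, HasDerivAt F
        (Complex.exp (-(σ:ℂ) * x) * (deriv f x - (σ:ℂ) * f x)) x := by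
      intro x
      have : HasDerivAt (fun y : ℝ => Complex.exp (-(σ:ℂ) * y) * f y)
          (-(σ:ℂ) * Complex.exp (-(σ:ℂ) * x) * f x + Complex.exp (-(σ:ℂ) * x) * deriv f x) x :=
        (expDeriv (-(σ:ℂ)) x).mul (hfdiff x)
      convert this using 1
      ring
    have hcont : Continuous (fun x : ℝ => Complex.exp (-(σ:ℂ) * x) * (deriv f x - (σ:ℂ) * f x)) := by
      apply Continuous.mul (expSmooth (-(σ:ℂ))).continuous
      exact (hfs.continuous_deriv (by exact_mod_cast le_top)).sub (continuous_const.mul hfs.continuous)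
    have step1 : ∫ x in Set.Ioo (0:ℝ) 1, (starRingEnd ℂ) (g x) * (deriv f x - (σ:ℂ) * f x)
        = ∫ x in Set.Ioo (0:ℝ) 1,
            (starRingEnd ℂ) c * (Complex.exp (-(σ:ℂ) * x) * (deriv f x - (σ:ℂ) * f x)) := by
      apply integral_congr_ae
      filter_upwards [hc] with x hx
      rw [hx, map_mul]
      rw [show ((starRingEnd ℂ) (Complex.exp (-(σ:ℂ) * x)) = Complex.exp (-(σ:ℂ) * x)) by
        rw [show (-(σ:ℂ) * x) = ((-σ : ℝ) : ℂ) * x by push_cast; ring]; exact expConj (-σ) x]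
      ring
    rw [step1, integral_const_mul]
    have step2 : ∫ x in Set.Ioo (0:ℝ) 1, Complex.exp (-(σ:ℂ) * x) * (deriv f x - (σ:ℂ) * f x)
        = ∫ x in (0:ℝ)..1, Complex.exp (-(σ:ℂ) * x) * (deriv f x - (σ:ℂ) * f x) := by
      rw [intervalIntegral.integral_of_le zero_le_one, integral_Ioc_eq_integral_Ioo]
    rw [step2]
    rw [intervalIntegral.integral_eq_sub_of_hasDerivAt (fun x _ => hFderiv x)
      (hcont.intervalIntegrable 0 1)]
    simp [hFdef, hf0, hf1]
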